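/- Let {x_n} be an exact system in a Hilbert space H with biorthogonal system {x̃_n}. Then {x_n} is hereditarily complete (i.e., every x ∈ H lies in the closed span of {⟨x, x̃_n⟩ x_n}) if and only if for every partition of the index set N into disjoint sets N₁ and N₂, the mixed system {x_n}_{n∈N₁} ∪ {x̃_n}_{n∈N₂} is complete in H. -/

import Mathlib

open scoped InnerProductSpace

lemma aux_mem_orthogonal_span {H : Type*} [NormedAddCommGroup H] [InnerProductSpace ℂ H]
    {s : Set H} {w : H} (h : ∀ u ∈ s, ⟪u, w⟫_ℂ = 0) :
    w ∈ (Submodule.span ℂ s)ᗮ := by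
  rw [Submodule.mem_orthogonal]
  intro u hu
  induction hu using Submodule.span_induction with
  | mem u hu => exact h u hu
  | zero => simp
  | add u v _ _ hu hv => simp [inner_add_left, hu, hv]
  | smul c u _ hu => simp [inner_smul_left, hu]

/-- An exact system is hereditarily complete iff for every partition N = N₁ ∪ N₂
the mixed system {x_n}_{N₁} ∪ {x̃_n}_{N₂} is complete. -/
theorem hereditarily_complete_iff_mixed_systems_complete
    {H : Type*} [NormedAddCommGroup H] [InnerProductSpace ℂ H] [CompleteSpace H]
    (x xt : ℕ → H)
    (hcomplete : (Submodule.span ℂ (Set.range x)).topologicalClosure = ⊤)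
    (hminimal : ∀ n₀ : ℕ,
      x n₀ ∉ (Submodule.span ℂ (x '' {n | n ≠ n₀})).topologicalClosure)
    (hbi : ∀ m n : ℕ, ⟪x m, xt n⟫_ℂ = if m = n then 1 else 0) :
    (∀ v : H, v ∈ (Submodule.span ℂ
        (Set.range (fun n => ⟪xt n, v⟫_ℂ • x n))).topologicalClosure)
      ↔ ∀ N₁ : Set ℕ,
        (Submodule.span ℂ (x '' N₁ ∪ xt '' N₁ᶜ)).topologicalClosure = ⊤ := by
  have hbi' : ∀ m n : ℕ, ⟪xt n, x m⟫_ℂ = if m = n then 1 else 0 := by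
    intro m n
    rw [← inner_conj_symm, hbi]
    split <;> simp
  constructor
  · -- hereditarily complete → mixed systems complete
    intro hher N₁
    rw [Submodule.topologicalClosure_eq_top_iff, Submodule.eq_bot_iff]
    intro v hv
    -- v is orthogonal to every generator of the span S_v
    set K := Submodule.span ℂ (Set.range (fun n => ⟪xt n, v⟫_ℂ • x n)) with hK
    have hvK : v ∈ Kᗮ := by
      apply aux_mem_orthogonal_span
      rintro u ⟨n, rfl⟩
      by_cases hn : n ∈ N₁
      · have hx : ⟪x n, v⟫_ℂ = 0 :=
          hv (x n) (Submodule.subset_span (Or.inl ⟨n, hn, rfl⟩))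
        simp [inner_smul_left, hx]
      · have hx : ⟪xt n, v⟫_ℂ = 0 :=
          hv (xt n) (Submodule.subset_span (Or.inr ⟨n, hn, rfl⟩))
        simp [hx]
    have hvK2 : v ∈ Kᗮᗮ := by
      rw [Submodule.orthogonal_orthogonal_eq_closure]
      exact hher v
    have : v ∈ Kᗮ ⊓ Kᗮᗮ := ⟨hvK, hvK2⟩
    rwa [Submodule.inf_orthogonal_eq_bot, Submodule.mem_bot] at this
  · -- mixed systems complete → hereditarily complete
    intro hmix v
    set K := (Submodule.span ℂ
        (Set.range (fun n => ⟪xt n, v⟫_ℂ • x n))).topologicalClosure with hKdef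
    haveI : CompleteSpace K :=
      (Submodule.isClosed_topologicalClosure _).completeSpace_coe
    obtain ⟨y, hy, z, hz, hvyz⟩ := K.exists_add_mem_mem_orthogonal v
    set N₁ : Set ℕ := {n | ⟪xt n, v⟫_ℂ ≠ 0} with hN₁
    -- every xt-functional for n ∉ N₁ vanishes on K
    have hker : ∀ n ∉ N₁, ∀ u ∈ K, ⟪xt n, u⟫_ℂ = 0 := by
      intro n hn u hu
      have hle : K ≤ LinearMap.ker ((innerSL ℂ (xt n) : H →L[ℂ] ℂ) : H →ₗ[ℂ] ℂ) := by
        apply Submodule.topologicalClosure_minimal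
        · rw [Submodule.span_le]
          rintro _ ⟨m, rfl⟩
          simp only [SetLike.mem_coe, LinearMap.mem_ker,
            ContinuousLinearMap.coe_coe, innerSL_apply_apply, inner_smul_right, hbi']
          by_cases hmn : m = n
          · subst hmn
            simp only [hN₁, Set.mem_setOf_eq, not_not] at hn
            simp [hn]
          · simp [hmn]
        · exact ContinuousLinearMap.isClosed_ker (innerSL ℂ (xt n))
      have := hle hu
      simpa using this
    have hzorth : z ∈ (Submodule.span ℂ (x '' N₁ ∪ xt '' N₁ᶜ))ᗮ := by
      apply aux_mem_orthogonal_span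
      rintro u (⟨n, hn, rfl⟩ | ⟨n, hn, rfl⟩)
      · -- n ∈ N₁ : x n ∈ K, and z ⊥ K
        have hxK : x n ∈ K := by
          have h1 : ⟪xt n, v⟫_ℂ • x n ∈ K :=
            Submodule.le_topologicalClosure _ (Submodule.subset_span ⟨n, rfl⟩)
          have h2 : (⟪xt n, v⟫_ℂ)⁻¹ • (⟪xt n, v⟫_ℂ • x n) ∈ K := K.smul_mem _ h1
          rwa [smul_smul, inv_mul_cancel₀ hn, one_smul] at h2
        exact hz (x n) hxK
      · -- n ∉ N₁ : ⟪xt n, z⟫ = ⟪xt n, v⟫ - ⟪xt n, y⟫ = 0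
        have h1 : ⟪xt n, v⟫_ℂ = 0 := by simpa [hN₁] using hn
        have h2 : ⟪xt n, y⟫_ℂ = 0 := hker n hn y hy
        have : z = v - y := by rw [hvyz]; abel
        rw [this, inner_sub_right, h1, h2, sub_zero]
    have hz0 : z = 0 := by
      have := hmix N₁
      rw [Submodule.topologicalClosure_eq_top_iff] at this
      rw [this, Submodule.mem_bot] at hzorth
      exact hzorth
    rw [hvyz, hz0, add_zero]
    exact hy
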